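/- arXiv:1107.3009 — 2 statements merged into one kernel-verified Lean document; each statement's English description precedes it below -/
import Mathlib

section
/- Let R be a commutative ring, n ≥ 3 a natural number, and let 𝔞, 𝔟 be two ideals of R. Then E(n,𝔞𝔟) ≤ ⁅E(n,𝔞), E(n,𝔟)⁆, and consequently E(n,R,𝔞𝔟) ≤ ⁅E(n,R,𝔞), E(n,R,𝔟)⁆. (Type A_{n−1} instance of the paper's lower-level lemma E(Φ,R,𝔞𝔟) ≤ [E(Φ,R,𝔞), E(Φ,R,𝔟)]; for type A no hypotheses on residue fields are needed.) -/
open Matrix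

/-- `SL n R` : the special linear group of degree `n` over `R`,
the simply connected Chevalley group of type `A_{n-1}`. -/
abbrev SL (n : ℕ) (R : Type*) [CommRing R] := Matrix.SpecialLinearGroup (Fin n) R

/-- The elementary transvection `e_{ij}(a) = 1 + a·E_{ij}` as an element of `SL n R`. -/
def elemTransv {n : ℕ} {R : Type*} [CommRing R] (i j : Fin n) (h : i ≠ j) (a : R) :
    SL n R :=
  ⟨Matrix.transvection i j a, Matrix.det_transvection_of_ne i j h a⟩

/-- The set of elementary transvections with parameters in `S`. -/
def transvSet (n : ℕ) {R : Type*} [CommRing R] (S : Set R) : Set (SL n R) :=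
  { x | ∃ i j : Fin n, ∃ h : i ≠ j, ∃ a ∈ S, x = elemTransv i j h a }

/-- `E(n,S)` : the subgroup generated by elementary transvections with parameters in `S`. -/
def Esub (n : ℕ) {R : Type*} [CommRing R] (S : Set R) : Subgroup (SL n R) :=
  Subgroup.closure (transvSet n S)

/-- `E(n,T,S)` : the normal closure of `E(n,S)` in `E(n,T)`, i.e. the subgroup
generated by the conjugates of elementary generators of level `S` by elements
of `E(n,T)`. -/
def relESet (n : ℕ) {R : Type*} [CommRing R] (T S : Set R) : Subgroup (SL n R) :=
  Subgroup.closure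
    { x | ∃ g ∈ Esub n T, ∃ y ∈ transvSet n S, x = g * y * g⁻¹ }

/-- `E(n,R,I)` : the relative elementary subgroup, the normal closure of
`E(n,I)` in the absolute elementary subgroup `E(n,R)`. -/
def relE (n : ℕ) {R : Type*} [CommRing R] (I : Ideal R) : Subgroup (SL n R) :=
  relESet n (Set.univ : Set R) (I : Set R)

/-- The reduction homomorphism `SL(n,R) → SL(n,R/I)`. -/
def redMap (n : ℕ) {R : Type*} [CommRing R] (I : Ideal R) : SL n R →* SL n (R ⧸ I) :=
  Matrix.SpecialLinearGroup.map (Ideal.Quotient.mk I)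

/-- `SL(n,R,I)` : the principal congruence subgroup of level `I`. -/
def SLcong (n : ℕ) {R : Type*} [CommRing R] (I : Ideal R) : Subgroup (SL n R) :=
  (redMap n I).ker

/-- `C(n,R,I)` : the full congruence subgroup of level `I`. -/
def Ccong (n : ℕ) {R : Type*} [CommRing R] (I : Ideal R) : Subgroup (SL n R) :=
  Subgroup.comap (redMap n I) (Subgroup.center (SL n (R ⧸ I)))

section Aux

variable {n : ℕ} {R : Type*} [CommRing R]

lemma elemTransv_add (i j : Fin n) (h : i ≠ j) (x y : R) :
    elemTransv i j h (x + y) = elemTransv i j h x * elemTransv i j h y := by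
  apply Subtype.ext
  simp only [elemTransv, Matrix.SpecialLinearGroup.coe_mul]
  exact (Matrix.transvection_mul_transvection_same i j h x y).symm

open scoped commutatorElement in
/-- The key commutator identity `⁅e_{ik}(x), e_{kj}(y)⁆ = e_{ij}(xy)`. -/
lemma commutator_elemTransv (i k j : Fin n) (hik : i ≠ k) (hkj : k ≠ j) (hij : i ≠ j)
    (x y : R) :
    ⁅elemTransv i k hik x, elemTransv k j hkj y⁆ = elemTransv i j hij (x * y) := by
  have key : elemTransv i k hik x * elemTransv k j hkj y =
      elemTransv i j hij (x * y) * (elemTransv k j hkj y * elemTransv i k hik x) := by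
    apply Subtype.ext
    simp only [elemTransv, Matrix.SpecialLinearGroup.coe_mul]
    show Matrix.transvection i k x * Matrix.transvection k j y =
      Matrix.transvection i j (x*y) * (Matrix.transvection k j y * Matrix.transvection i k x)
    simp only [Matrix.transvection, Matrix.add_mul, Matrix.mul_add, Matrix.one_mul,
      Matrix.mul_one, Matrix.single_mul_single_same, Matrix.single_mul_single_of_ne,
      hik, hkj, hij, hik.symm, hkj.symm, hij.symm, Ne, not_false_iff, add_zero, zero_add]
    abel
  have : ⁅elemTransv i k hik x, elemTransv k j hkj y⁆ =
      (elemTransv i k hik x * elemTransv k j hkj y) *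
        (elemTransv k j hkj y * elemTransv i k hik x)⁻¹ := by
    rw [commutatorElement_def]
    group
  rw [this, key, mul_assoc, mul_inv_cancel, mul_one]

lemma elemTransv_mem_Esub {S : Set R} {i j : Fin n} {h : i ≠ j} {x : R} (hx : x ∈ S) :
    elemTransv i j h x ∈ Esub n S :=
  Subgroup.subset_closure ⟨i, j, h, x, hx, rfl⟩

lemma exists_third (hn : 3 ≤ n) (i j : Fin n) : ∃ k : Fin n, k ≠ i ∧ k ≠ j := by
  have hne : ({i, j} : Finset (Fin n)) ≠ Finset.univ := by
    intro h
    have h2 : (Finset.univ : Finset (Fin n)).card ≤ 2 := by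
      rw [← h]; exact (Finset.card_insert_le i {j}).trans (by simp)
    rw [Finset.card_univ, Fintype.card_fin] at h2
    omega
  obtain ⟨k, -, hk⟩ := Finset.exists_of_ssubset (Finset.ssubset_univ_iff.mpr hne)
  simp only [Finset.mem_insert, Finset.mem_singleton, not_or] at hk
  exact ⟨k, hk.1, hk.2⟩

lemma Esub_mul_le (hn : 3 ≤ n) (a b : Ideal R) :
    Esub n ((a * b : Ideal R) : Set R) ≤ ⁅Esub n (a : Set R), Esub n (b : Set R)⁆ := by
  rw [Esub, Subgroup.closure_le]
  rintro _ ⟨i, j, hij, c, hc, rfl⟩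
  show elemTransv i j hij c ∈ _
  refine Submodule.mul_induction_on hc ?_ ?_
  · intro x hx y hy
    obtain ⟨k, hki, hkj⟩ := exists_third hn i j
    rw [← commutator_elemTransv i k j (Ne.symm hki) hkj hij x y]
    exact Subgroup.commutator_mem_commutator (elemTransv_mem_Esub hx) (elemTransv_mem_Esub hy)
  · intro x y hx hy
    rw [elemTransv_add]
    exact mul_mem hx hy

lemma Esub_le_relE (I : Ideal R) : Esub n (I : Set R) ≤ relE n I := by
  rw [Esub, Subgroup.closure_le]
  intro y hy
  exact Subgroup.subset_closure ⟨1, one_mem _, y, hy, by group⟩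

lemma conj_relE_le {g : SL n R} (hg : g ∈ Esub n (Set.univ : Set R)) (I : Ideal R) :
    Subgroup.map (MulAut.conj g).toMonoidHom (relE n I) ≤ relE n I := by
  rw [relE, relESet, MonoidHom.map_closure, Subgroup.closure_le]
  rintro _ ⟨_, ⟨h, hh, y, hy, rfl⟩, rfl⟩
  refine Subgroup.subset_closure ⟨g * h, mul_mem hg hh, y, hy, ?_⟩
  simp [MulAut.conj_apply, mul_assoc]

lemma conj_mem_commutator {g x : SL n R} (hg : g ∈ Esub n (Set.univ : Set R))
    (a b : Ideal R) (hx : x ∈ ⁅relE n a, relE n b⁆) :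
    g * x * g⁻¹ ∈ ⁅relE n a, relE n b⁆ := by
  have : g * x * g⁻¹ ∈ Subgroup.map (MulAut.conj g).toMonoidHom ⁅relE n a, relE n b⁆ :=
    ⟨x, hx, rfl⟩
  rw [Subgroup.map_commutator] at this
  exact Subgroup.commutator_mono (conj_relE_le hg a) (conj_relE_le hg b) this

end Aux

/-- For a commutative ring `R`, `n ≥ 3` and ideals `𝔞, 𝔟 ⊴ R`,
`E(n,𝔞𝔟) ≤ ⁅E(n,𝔞), E(n,𝔟)⁆` and consequently
`E(n,R,𝔞𝔟) ≤ ⁅E(n,R,𝔞), E(n,R,𝔟)⁆`. -/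
theorem Esub_mul_le_commutator_and_relE_mul_le_commutator
    {R : Type*} [CommRing R] (n : ℕ) (hn : 3 ≤ n) (a b : Ideal R) :
    Esub n ((a * b : Ideal R) : Set R) ≤ ⁅Esub n (a : Set R), Esub n (b : Set R)⁆ ∧
      relE n (a * b) ≤ ⁅relE n a, relE n b⁆ := by
  refine ⟨Esub_mul_le hn a b, ?_⟩
  rw [relE, relESet, Subgroup.closure_le]
  rintro _ ⟨g, hg, y, hy, rfl⟩
  have hy' : y ∈ ⁅relE n a, relE n b⁆ := by
    refine Subgroup.commutator_mono (Esub_le_relE a) (Esub_le_relE b) ?_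
    exact Esub_mul_le hn a b (Subgroup.subset_closure hy)
  exact conj_mem_commutator hg a b hy'
end

section
/- Let R be a commutative local ring, n ≥ 2 a natural number, and 𝔞 an ideal of R. Then SL(n,R,𝔞) = E(n,𝔞)·T(n,R,𝔞): every g in the principal congruence subgroup SL(n,R,𝔞) can be written g = e·h with e ∈ E(n,𝔞) and h a diagonal matrix of determinant 1 satisfying h_{ii} − 1 ∈ 𝔞 for all i, and conversely every such product lies in SL(n,R,𝔞). (Type A_{n−1} instance of the paper's Lemma: for an ideal 𝔞 of a local ring, G(Φ,R,𝔞) = E(Φ,𝔞) T(Φ,R,𝔞).) -/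
open Matrix

section Aux

variable {n : ℕ} {R : Type*} [CommRing R]

lemma red_one_entry (a : Ideal R) (i j : Fin n) :
    Ideal.Quotient.mk a ((1 : Matrix (Fin n) (Fin n) R) i j)
      = (1 : Matrix (Fin n) (Fin n) (R ⧸ a)) i j := by
  simp [Matrix.one_apply, apply_ite (Ideal.Quotient.mk a)]

lemma mem_SLcong_iff {a : Ideal R} {g : SL n R} :
    g ∈ SLcong n a ↔
      ∀ i j : Fin n, g.val i j - (1 : Matrix (Fin n) (Fin n) R) i j ∈ a := by
  rw [SLcong, MonoidHom.mem_ker]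
  constructor
  · intro hg i j
    have h1 := congrArg (fun x : SL n (R ⧸ a) => x.val i j) hg
    simp only [redMap, Matrix.SpecialLinearGroup.map_apply_coe, RingHom.mapMatrix_apply,
      Matrix.map_apply, Matrix.SpecialLinearGroup.coe_one] at h1
    rw [← red_one_entry a i j] at h1
    exact Ideal.Quotient.eq.mp h1
  · intro hg
    apply Subtype.ext
    ext i j
    show Ideal.Quotient.mk a (g.val i j) = (1 : Matrix (Fin n) (Fin n) (R ⧸ a)) i j
    rw [← red_one_entry a i j]
    exact Ideal.Quotient.eq.mpr (hg i j)

lemma elemTransv_mem_SLcong {a : Ideal R} {i j : Fin n} (hij : i ≠ j) {c : R} (hc : c ∈ a) :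
    elemTransv i j hij c ∈ SLcong n a := by
  rw [mem_SLcong_iff]
  intro r k
  show Matrix.transvection i j c r k - _ ∈ a
  rw [Matrix.transvection, Matrix.add_apply, add_sub_cancel_left]
  by_cases h : r = i ∧ k = j
  · rcases h with ⟨rfl, rfl⟩
    simpa using hc
  · have hz : Matrix.single i j c r k = 0 := by
      simp only [Matrix.single, Matrix.of_apply, ite_eq_right_iff]
      rintro ⟨rfl, rfl⟩
      exact absurd ⟨rfl, rfl⟩ h
    rw [hz]
    exact a.zero_mem

lemma Esub_le_SLcong (a : Ideal R) : Esub n (a : Set R) ≤ SLcong n a := by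
  rw [Esub, Subgroup.closure_le]
  rintro x ⟨i, j, hij, c, hc, rfl⟩
  exact elemTransv_mem_SLcong hij hc

/-- The first `m` columns are cleared off the diagonal. -/
def Cleared (m : ℕ) (M : Matrix (Fin n) (Fin n) R) : Prop :=
  ∀ i k : Fin n, (k : ℕ) < m → i ≠ k → M i k = 0

lemma clear_col_aux (a : Ideal R) (j : Fin n) (M : SL n R) (hM : M ∈ SLcong n a)
    (hcl : Cleared (j : ℕ) M.val) (hu : IsUnit (M.val j j)) (s : Finset (Fin n)) :
    ∃ e ∈ Esub n (a : Set R), Cleared (j : ℕ) ((e * M).val) ∧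
      (∀ k, (e * M).val j k = M.val j k) ∧
      (∀ i ∈ s, i ≠ j → (e * M).val i j = 0) := by
  classical
  induction s using Finset.induction with
  | empty =>
      exact ⟨1, one_mem _, by simpa using hcl, by simp, by simp⟩
  | @insert i₀ s hi₀ ih =>
      obtain ⟨e, he, hecl, herow, hes⟩ := ih
      by_cases hij : i₀ = j
      · refine ⟨e, he, hecl, herow, ?_⟩
        intro i hi hij'
        rcases Finset.mem_insert.mp hi with rfl | hi
        · exact absurd hij hij'
        · exact hes i hi hij'
      · set N := e * M with hN
        have hNc : N ∈ SLcong n a := mul_mem (Esub_le_SLcong a he) hM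
        have hNij : N.val i₀ j ∈ a := by
          have h1 := mem_SLcong_iff.mp hNc i₀ j
          simpa [Matrix.one_apply, hij] using h1
        set c : R := -(N.val i₀ j * ((hu.unit⁻¹ : Rˣ) : R)) with hcdef
        have hc : c ∈ a := a.neg_mem (a.mul_mem_right _ hNij)
        have hkey : (elemTransv i₀ j hij c * e * M).val
            = Matrix.transvection i₀ j c * N.val := by
          rw [mul_assoc, Matrix.SpecialLinearGroup.coe_mul]
          rfl
        refine ⟨elemTransv i₀ j hij c * e,
          mul_mem (Subgroup.subset_closure ⟨i₀, j, hij, c, hc, rfl⟩) he, ?_, ?_, ?_⟩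
        · intro i k hk hik
          rw [hkey]
          by_cases hi : i = i₀
          · subst hi
            rw [Matrix.transvection_mul_apply_same]
            have hjk : j ≠ k := by
              intro h; rw [← h] at hk; exact lt_irrefl _ hk
            rw [hecl i k hk hik, hecl j k hk hjk, mul_zero, add_zero]
          · rw [Matrix.transvection_mul_apply_of_ne _ _ _ _ hi]
            exact hecl i k hk hik
        · intro k
          rw [hkey, Matrix.transvection_mul_apply_of_ne _ _ _ _ (Ne.symm hij)]
          exact herow k
        · intro i hi hij'
          rcases Finset.mem_insert.mp hi with rfl | his
          · rw [hkey, Matrix.transvection_mul_apply_same]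
            have hNjj : N.val j j = M.val j j := herow j
            have hMu : M.val j j = (hu.unit : R) := hu.unit_spec.symm
            rw [hNjj, hMu, hcdef]
            rw [neg_mul, Units.inv_mul_cancel_right]
            exact add_neg_cancel _
          · have hii₀ : i ≠ i₀ := by rintro rfl; exact hi₀ his
            rw [hkey, Matrix.transvection_mul_apply_of_ne _ _ _ _ hii₀]
            exact hes i his hij'

open IsLocalRing in
lemma exists_pivot [IsLocalRing R] (j : Fin n) (M : SL n R)
    (hcl : Cleared (j : ℕ) M.val) :
    ∃ i : Fin n, (j : ℕ) ≤ (i : ℕ) ∧ IsUnit (M.val i j) := by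
  classical
  by_contra hcon
  push_neg at hcon
  set N : Matrix (Fin n) (Fin n) (ResidueField R) := M.val.map (residue R) with hNdef
  have hdet : N.det = 1 := by
    rw [hNdef, ← RingHom.mapMatrix_apply, ← RingHom.map_det, M.prop, _root_.map_one]
  have hN0 : ∃ v ≠ 0, N.mulVec v = 0 := by
    by_cases hall : ∀ k : Fin n, (k : ℕ) < (j : ℕ) → IsUnit (M.val k k)
    · refine ⟨fun i => if i = j then 1 else if (i : ℕ) < (j : ℕ)
        then -(residue R (M.val i j)) * (residue R (M.val i i))⁻¹ else 0, ?_, ?_⟩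
      · intro h
        have := congrFun h j
        simp at this
      · funext r
        show (Finset.univ.sum fun c => N r c * _) = 0
        rw [← Finset.add_sum_erase _ _ (Finset.mem_univ j)]
        by_cases hr : (r : ℕ) < (j : ℕ)
        · have hrj : r ≠ j := by
            intro h; rw [h] at hr; exact lt_irrefl _ hr
          have hsum : (Finset.sum ((Finset.univ : Finset (Fin n)).erase j) fun c => N r c *
              (if c = j then 1 else if (c : ℕ) < (j : ℕ)
                then -(residue R (M.val c j)) * (residue R (M.val c c))⁻¹ else 0))
              = N r r * (-(residue R (M.val r j)) * (residue R (M.val r r))⁻¹) := by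
            rw [Finset.sum_eq_single_of_mem r (Finset.mem_erase.mpr ⟨hrj, Finset.mem_univ r⟩)]
            · simp [hrj, hr]
            · intro b hb hbr
              by_cases hbj : (b : ℕ) < (j : ℕ)
              · have : N r b = 0 := by
                  show residue R (M.val r b) = 0
                  rw [hcl r b hbj (Ne.symm hbr), map_zero]
                rw [this, zero_mul]
              · have hbj' : b ≠ j := (Finset.mem_erase.mp hb).1
                simp [hbj', hbj]
          rw [hsum]
          have hNrr : N r r ≠ 0 := by
            show residue R (M.val r r) ≠ 0
            rw [Ne, residue_eq_zero_iff, mem_maximalIdeal]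
            exact fun h => h (hall r hr)
          have hNrr' : N r r * (residue R (M.val r r))⁻¹ = 1 := mul_inv_cancel₀ hNrr
          have : N r r * (-(residue R (M.val r j)) * (residue R (M.val r r))⁻¹)
              = -(N r j) := by
            have : N r r * (-(residue R (M.val r j)) * (residue R (M.val r r))⁻¹)
                = -(residue R (M.val r j)) * (N r r * (residue R (M.val r r))⁻¹) := by ring
            rw [this, hNrr', mul_one]
            rfl
          rw [this]
          simp
        · have hrj : (j : ℕ) ≤ (r : ℕ) := Nat.le_of_not_lt hr
          have hNrj : N r j = 0 := by
            show residue R (M.val r j) = 0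
            rw [residue_eq_zero_iff, mem_maximalIdeal]
            exact hcon r hrj
          rw [hNrj, if_pos rfl, mul_one]
          rw [Finset.sum_eq_zero, add_zero]
          intro b hb
          have hbj : b ≠ j := (Finset.mem_erase.mp hb).1
          by_cases hbj' : (b : ℕ) < (j : ℕ)
          · have hrb : r ≠ b := by
              intro h; rw [h] at hrj
              exact absurd hbj' (Nat.not_lt.mpr hrj)
            have : N r b = 0 := by
              show residue R (M.val r b) = 0
              rw [hcl r b hbj' hrb, map_zero]
            rw [this, zero_mul]
          · simp [hbj, hbj']
    · push_neg at hall
      obtain ⟨k₀, hk₀lt, hk₀⟩ := hall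
      refine ⟨Pi.single k₀ 1, ?_, ?_⟩
      · intro h
        have := congrFun h k₀
        simp at this
      · rw [Matrix.mulVec_single]
        funext r
        show N r k₀ * 1 = 0
        rw [mul_one]
        by_cases hr : r = k₀
        · subst hr
          show residue R (M.val r r) = 0
          rw [residue_eq_zero_iff, mem_maximalIdeal]
          exact hk₀
        · show residue R (M.val r k₀) = 0
          rw [hcl r k₀ hk₀lt hr, map_zero]
  have := Matrix.exists_mulVec_eq_zero_iff.mp hN0
  rw [hdet] at this
  exact one_ne_zero this

open IsLocalRing in
lemma clear_cols [IsLocalRing R] (a : Ideal R) :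
    ∀ m : ℕ, m ≤ n → ∀ g : SL n R, g ∈ SLcong n a →
      ∃ e ∈ Esub n (a : Set R), Cleared m ((e * g).val) := by
  intro m
  induction m with
  | zero =>
      intro _ g _
      exact ⟨1, one_mem _, fun i k hk _ => absurd hk (Nat.not_lt_zero _)⟩
  | succ m ih =>
      intro hm g hg
      obtain ⟨e, he, hecl⟩ := ih (Nat.le_of_succ_le hm) g hg
      set j : Fin n := ⟨m, hm⟩ with hjdef
      set M := e * g with hMdef
      have hMc : M ∈ SLcong n a := mul_mem (Esub_le_SLcong a he) hg
      have hecl' : Cleared (j : ℕ) M.val := hecl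
      have main : ∃ f ∈ Esub n (a : Set R), Cleared (j : ℕ) ((f * M).val) ∧
          IsUnit ((f * M).val j j) := by
        by_cases ha : a ≤ maximalIdeal R
        · refine ⟨1, one_mem _, by simpa using hecl', ?_⟩
          rw [one_mul]
          have h1 : M.val j j - 1 ∈ maximalIdeal R := by
            apply ha
            have := mem_SLcong_iff.mp hMc j j
            simpa [Matrix.one_apply] using this
          by_contra hnu
          have h2 : -(M.val j j - 1) ∈ nonunits R := (mem_maximalIdeal _).mp (neg_mem h1)
          have h3 : (1 : R) ∈ nonunits R := by
            have := nonunits_add (hnu : M.val j j ∈ nonunits R) h2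
            simpa using this
          exact h3 isUnit_one
        · have hatop : a = ⊤ := by
            by_contra h; exact ha (le_maximalIdeal h)
          have h1a : (1 : R) ∈ a := by rw [hatop]; trivial
          obtain ⟨i, hji, hiu⟩ := exists_pivot j M hecl'
          by_cases hjj : IsUnit (M.val j j)
          · exact ⟨1, one_mem _, by simpa using hecl', by simpa using hjj⟩
          · have hij : i ≠ j := by rintro rfl; exact hjj hiu
            have hji' : j ≠ i := Ne.symm hij
            have hkey : (elemTransv j i hji' 1 * M).val
                = Matrix.transvection j i (1 : R) * M.val := by
              rw [Matrix.SpecialLinearGroup.coe_mul]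
              rfl
            refine ⟨elemTransv j i hji' 1,
              Subgroup.subset_closure ⟨j, i, hji', 1, h1a, rfl⟩, ?_, ?_⟩
            · intro r k hk hrk
              rw [hkey]
              by_cases hr : r = j
              · subst hr
                rw [Matrix.transvection_mul_apply_same]
                have hik : i ≠ k := by
                  intro h
                  rw [← h] at hk
                  exact absurd hji (Nat.not_le.mpr hk)
                rw [hecl' j k hk hrk, hecl' i k hk hik, mul_zero, add_zero]
              · rw [Matrix.transvection_mul_apply_of_ne _ _ _ _ hr]
                exact hecl' r k hk hrk
            · rw [hkey, Matrix.transvection_mul_apply_same, one_mul]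
              by_contra hnu
              have h2 : -(M.val j j) ∈ nonunits R := by
                intro h
                exact hjj (IsUnit.neg_iff _ |>.mp h)
              have h3 := nonunits_add (hnu : M.val j j + M.val i j ∈ nonunits R) h2
              have h4 : M.val i j ∈ nonunits R := by
                have : M.val j j + M.val i j + -(M.val j j) = M.val i j := by ring
                rwa [this] at h3
              exact h4 hiu
      obtain ⟨f, hf, hfcl, hfu⟩ := main
      have hfMc : f * M ∈ SLcong n a := mul_mem (Esub_le_SLcong a hf) hMc
      obtain ⟨e2, he2, hcl2, _, hcol2⟩ :=
        clear_col_aux a j (f * M) hfMc hfcl hfu Finset.univ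
      refine ⟨e2 * (f * e), mul_mem he2 (mul_mem hf he), ?_⟩
      have hassoc : e2 * (f * e) * g = e2 * (f * M) := by
        rw [hMdef]; group
      rw [hassoc]
      intro i k hk hik
      rcases Nat.lt_succ_iff_lt_or_eq.mp hk with h | h
      · exact hcl2 i k h hik
      · have hkj : k = j := Fin.ext h
        subst hkj
        exact hcol2 i (Finset.mem_univ i) hik

end Aux

/-- For an ideal `𝔞` of a commutative local ring `R` and `n ≥ 2`,
`SL(n,R,𝔞) = E(n,𝔞)·T(n,R,𝔞)`. -/
theorem SLcong_eq_Esub_mul_torus_of_localRing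
    {R : Type*} [CommRing R] [IsLocalRing R] (n : ℕ) (hn : 2 ≤ n) (a : Ideal R)
    (g : SL n R) :
    g ∈ SLcong n a ↔
      ∃ e ∈ Esub n (a : Set R), ∃ h : SL n R,
        (∀ i j : Fin n, i ≠ j → h.val i j = 0) ∧
        (∀ i : Fin n, h.val i i - 1 ∈ a) ∧
        g = e * h := by
  constructor
  · intro hg
    obtain ⟨e, he, hecl⟩ := clear_cols a n le_rfl g hg
    refine ⟨e⁻¹, inv_mem he, e * g, ?_, ?_, ?_⟩
    · intro i j hij
      exact hecl i j j.isLt hij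
    · intro i
      have hmem : e * g ∈ SLcong n a := mul_mem (Esub_le_SLcong a he) hg
      have := mem_SLcong_iff.mp hmem i i
      simpa [Matrix.one_apply] using this
    · exact (inv_mul_cancel_left e g).symm
  · rintro ⟨e, he, h, hdiag, hdiag1, rfl⟩
    refine mul_mem (Esub_le_SLcong a he) ?_
    rw [mem_SLcong_iff]
    intro i j
    by_cases hij : i = j
    · subst hij
      simpa [Matrix.one_apply] using hdiag1 i
    · rw [hdiag i j hij]
      simp [Matrix.one_apply, hij]
end
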